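/- arXiv:1502.02906 — 6 statements merged into one kernel-verified Lean document; each statement's English description precedes it below -/
import Mathlib

section
/- The symbols τ_g(x,y) := ω(x,y,g)·ω(x, y g y⁻¹, y)⁻¹·ω(xy g y⁻¹ x⁻¹, x, y) satisfy the twisted cocycle condition τ_g(y,z)·τ_g(x,yz) = τ_{z g z⁻¹}(x,y)·τ_g(xy,z) for all x,y,z,g ∈ G. -/
set_option maxHeartbeats 2000000


/-- The 3-cocycle condition for a function `G³ → ℂˣ` with trivial coefficients. -/
def IsCocycle3 {G : Type*} [Group G] (ω : G → G → G → ℂˣ) : Prop :=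
  ∀ x y z w : G,
    ω y z w * (ω (x * y) z w)⁻¹ * ω x (y * z) w * (ω x y (z * w))⁻¹ * ω x y z = 1

/-- Normalization of a 3-cochain. -/
def IsNormalized3 {G : Type*} [Group G] (ω : G → G → G → ℂˣ) : Prop :=
  ∀ x y : G, ω 1 x y = 1 ∧ ω x 1 y = 1 ∧ ω x y 1 = 1

/-- The symbols `τ_g(x,y) = ω(x,y,g)·ω(x, y▷g, y)⁻¹·ω((xy)▷g, x, y)`. -/
def tau {G : Type*} [Group G] (ω : G → G → G → ℂˣ) (g x y : G) : ℂˣ :=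
  ω x y g * (ω x (y * g * y⁻¹) y)⁻¹ * ω (x * y * g * y⁻¹ * x⁻¹) x y

/-- The twisted cocycle condition for the symbols τ. -/
theorem twisted_cocycle_condition {G : Type*} [Group G] (ω : G → G → G → ℂˣ)
    (hω : IsCocycle3 ω) (hn : IsNormalized3 ω) (x y z g : G) :
    tau ω g y z * tau ω g x (y * z) =
      tau ω (z * g * z⁻¹) x y * tau ω g (x * y) z := by
  have E1 := hω x y z g
  have E2 := hω x y (z * g * z⁻¹) z
  have E3 := hω x (y * (z * g * z⁻¹) * y⁻¹) y z
  have E4 := hω (x * (y * (z * g * z⁻¹) * y⁻¹) * x⁻¹) x y z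
  have key : tau ω g y z * tau ω g x (y * z) *
      ((ω y (z * g * z⁻¹) z * (ω (x * y) (z * g * z⁻¹) z)⁻¹ * ω x (y * (z * g * z⁻¹)) z *
          (ω x y (z * g * z⁻¹ * z))⁻¹ * ω x y (z * g * z⁻¹)) *
       (ω x y z * (ω (x * (y * (z * g * z⁻¹) * y⁻¹) * x⁻¹ * x) y z)⁻¹ *
          ω (x * (y * (z * g * z⁻¹) * y⁻¹) * x⁻¹) (x * y) z *
          (ω (x * (y * (z * g * z⁻¹) * y⁻¹) * x⁻¹) x (y * z))⁻¹ *
          ω (x * (y * (z * g * z⁻¹) * y⁻¹) * x⁻¹) x y)) =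
      tau ω (z * g * z⁻¹) x y * tau ω g (x * y) z *
      ((ω y z g * (ω (x * y) z g)⁻¹ * ω x (y * z) g * (ω x y (z * g))⁻¹ * ω x y z) *
       (ω (y * (z * g * z⁻¹) * y⁻¹) y z * (ω (x * (y * (z * g * z⁻¹) * y⁻¹)) y z)⁻¹ *
          ω x (y * (z * g * z⁻¹) * y⁻¹ * y) z *
          (ω x (y * (z * g * z⁻¹) * y⁻¹) (y * z))⁻¹ *
          ω x (y * (z * g * z⁻¹) * y⁻¹) y)) := by
    simp only [tau, mul_assoc, mul_inv_rev, inv_inv, inv_mul_cancel_left, mul_inv_cancel_left,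
      inv_mul_cancel, mul_inv_cancel, mul_one, one_mul]
    rw [Units.ext_iff]
    push_cast
    field_simp
  rw [E1, E2, E3, E4, mul_one, mul_one, mul_one] at key
  exact key
end

section
/- For any x ∈ G and m ∈ ℕ, ω(x, x^m, x) = τ_x(x, x^m) = τ_x(x^m, x), where τ_g(x,y) = ω(x,y,g)·ω(x, ygy⁻¹, y)⁻¹·ω(xygy⁻¹x⁻¹, x, y). -/
/-- `ω(x,x^m,x) = τ_x(x,x^m) = τ_x(x^m,x)`. -/
theorem omega_eq_tau_pow {G : Type*} [Group G] (ω : G → G → G → ℂˣ)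
    (hω : IsCocycle3 ω) (hn : IsNormalized3 ω) (x : G) (m : ℕ) :
    ω x (x ^ m) x = tau ω x x (x ^ m) ∧ ω x (x ^ m) x = tau ω x (x ^ m) x := by
  have h1 : x ^ m * x * (x ^ m)⁻¹ = x := by group
  have h2 : x * x ^ m * x * (x ^ m)⁻¹ * x⁻¹ = x := by group
  have h3 : x * x * x⁻¹ = x := by group
  have h4 : x ^ m * x * x * x⁻¹ * (x ^ m)⁻¹ = x := by group
  constructor
  · rw [tau, h1, h2]; simp [mul_assoc]
  · rw [tau, h3, h4]; simp [mul_assoc]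
end

section
/- Let ω : G³ → ℂˣ be a 3-cocycle with ω restricted to H³ trivial, g ∈ G, and S = Stab_H(gH) = {s ∈ H : g⁻¹sg ∈ H} the stabilizer in H of the left coset gH. Then the function β_g(s,t) = ω(s, tg, g⁻¹t⁻¹g)·ω(s,t,g)·ω(stg, g⁻¹t⁻¹g, g⁻¹s⁻¹g)⁻¹ is a 2-cocycle on S with values in ℂˣ. -/
/-- `β_g(s,t) = ω(s, tg, g⁻¹t⁻¹g)·ω(s,t,g)·ω(stg, g⁻¹t⁻¹g, g⁻¹s⁻¹g)⁻¹`. -/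
def betaG {G : Type*} [Group G] (ω : G → G → G → ℂˣ) (g s t : G) : ℂˣ :=
  ω s (t * g) (g⁻¹ * t⁻¹ * g) * ω s t g * (ω (s * t * g) (g⁻¹ * t⁻¹ * g) (g⁻¹ * s⁻¹ * g))⁻¹

set_option maxHeartbeats 2000000 in
/-- `β_g` is a 2-cocycle on the stabilizer `S = {s ∈ H : g⁻¹sg ∈ H}`. -/
theorem betaG_is_two_cocycle {G : Type*} [Group G] (H : Subgroup G)
    (ω : G → G → G → ℂˣ) (hω : IsCocycle3 ω) (hn : IsNormalized3 ω)
    (hHtriv : ∀ a ∈ H, ∀ b ∈ H, ∀ c ∈ H, ω a b c = 1) (g : G) :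
    ∀ s t u : G, s ∈ H → g⁻¹ * s * g ∈ H → t ∈ H → g⁻¹ * t * g ∈ H →
      u ∈ H → g⁻¹ * u * g ∈ H →
      betaG ω g t u * (betaG ω g (s * t) u)⁻¹ * betaG ω g s (t * u) *
        (betaG ω g s t)⁻¹ = 1 := by
  intro s t u hs hs' ht ht' hu hu'
  have hs2 : g⁻¹ * (s⁻¹ * g) ∈ H := by
    have e : g⁻¹ * (s⁻¹ * g) = (g⁻¹ * s * g)⁻¹ := by group
    rw [e]; exact H.inv_mem hs'
  have ht2 : g⁻¹ * (t⁻¹ * g) ∈ H := by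
    have e : g⁻¹ * (t⁻¹ * g) = (g⁻¹ * t * g)⁻¹ := by group
    rw [e]; exact H.inv_mem ht'
  have hu2 : g⁻¹ * (u⁻¹ * g) ∈ H := by
    have e : g⁻¹ * (u⁻¹ * g) = (g⁻¹ * u * g)⁻¹ := by group
    rw [e]; exact H.inv_mem hu'
  have m5 : ω s t u = 1 := hHtriv s hs t ht u hu
  have m6 : ω (g⁻¹ * (u⁻¹ * g)) (g⁻¹ * (t⁻¹ * g)) (g⁻¹ * (s⁻¹ * g)) = 1 :=
    hHtriv _ hu2 _ ht2 _ hs2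
  have h1 := hω s t u g
  have h2 := hω s t (u * g) (g⁻¹ * (u⁻¹ * g))
  have h3 := hω s (t * (u * g)) (g⁻¹ * (u⁻¹ * g)) (g⁻¹ * (t⁻¹ * g))
  have h4 := hω (s * (t * (u * g))) (g⁻¹ * (u⁻¹ * g)) (g⁻¹ * (t⁻¹ * g)) (g⁻¹ * (s⁻¹ * g))
  simp only [betaG, mul_assoc, mul_inv_rev, inv_inv, mul_inv_cancel_left,
    inv_mul_cancel_left] at h1 h2 h3 h4 ⊢
  have key :
      (ω t u g * ((ω (s * t) u g)⁻¹ * (ω s (t * u) g * ((ω s t (u * g))⁻¹ * ω s t u)))) *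
        ((ω t (u * g) (g⁻¹ * (u⁻¹ * g)) *
            ((ω (s * t) (u * g) (g⁻¹ * (u⁻¹ * g)))⁻¹ *
              (ω s (t * (u * g)) (g⁻¹ * (u⁻¹ * g)) * ((ω s t g)⁻¹ * ω s t (u * g))))) *
          ((ω (t * (u * g)) (g⁻¹ * (u⁻¹ * g)) (g⁻¹ * (t⁻¹ * g)) *
                ((ω (s * (t * (u * g))) (g⁻¹ * (u⁻¹ * g)) (g⁻¹ * (t⁻¹ * g)))⁻¹ *
                  (ω s (t * g) (g⁻¹ * (t⁻¹ * g)) *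
                    ((ω s (t * (u * g)) (g⁻¹ * (u⁻¹ * (t⁻¹ * g))))⁻¹ *
                      ω s (t * (u * g)) (g⁻¹ * (u⁻¹ * g))))))⁻¹ *
            ((ω (g⁻¹ * (u⁻¹ * g)) (g⁻¹ * (t⁻¹ * g)) (g⁻¹ * (s⁻¹ * g)) *
                  ((ω (s * (t * g)) (g⁻¹ * (t⁻¹ * g)) (g⁻¹ * (s⁻¹ * g)))⁻¹ *
                    (ω (s * (t * (u * g))) (g⁻¹ * (u⁻¹ * (t⁻¹ * g))) (g⁻¹ * (s⁻¹ * g)) *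
                      ((ω (s * (t * (u * g))) (g⁻¹ * (u⁻¹ * g)) (g⁻¹ * (t⁻¹ * (s⁻¹ * g))))⁻¹ *
                        ω (s * (t * (u * g))) (g⁻¹ * (u⁻¹ * g)) (g⁻¹ * (t⁻¹ * g))))))⁻¹ *
              ((ω s t u)⁻¹ *
                ω (g⁻¹ * (u⁻¹ * g)) (g⁻¹ * (t⁻¹ * g)) (g⁻¹ * (s⁻¹ * g)))))) = 1 := by
    rw [h1, h2, h3, h4, m5, m6]
    norm_num
  refine Eq.trans ?_ key
  refine Units.ext ?_
  simp only [Units.val_mul, Units.val_inv_eq_inv_val]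
  field_simp
end

section
/- If ω = dη is the coboundary of a normalized 2-cochain η on G, and ψ = η restricted to H², then the 2-cocycle β_g(s,t) = ψ(s,t)·ψ(g⁻¹t⁻¹g, g⁻¹s⁻¹g)·ω(s, tg, g⁻¹t⁻¹g)·ω(s,t,g)·ω(stg, g⁻¹t⁻¹g, g⁻¹s⁻¹g)⁻¹ on S = Stab_H(gH) equals the coboundary dλ of the 1-cochain λ(s) = η(sg, g⁻¹s⁻¹g)·η(s,g); that is, β_g(s,t) = λ(t)·λ(st)⁻¹·λ(s) for all s,t ∈ S. -/
/-- The coboundary of a 2-cochain: `(dη)(x,y,z) = η(y,z)·η(xy,z)⁻¹·η(x,yz)·η(x,y)⁻¹`. -/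
def d2 {G : Type*} [Group G] (η : G → G → ℂˣ) (x y z : G) : ℂˣ :=
  η y z * (η (x * y) z)⁻¹ * η x (y * z) * (η x y)⁻¹

/-- If `ω = dη` and `ψ = η|_{H²}` then
`β_g(s,t) = ψ(s,t)·ψ(g⁻¹t⁻¹g, g⁻¹s⁻¹g)·ω(s,tg,g⁻¹t⁻¹g)·ω(s,t,g)·ω(stg,g⁻¹t⁻¹g,g⁻¹s⁻¹g)⁻¹`
is the coboundary of `λ(s) = η(sg, g⁻¹s⁻¹g)·η(s,g)`. -/
theorem betaG_coboundary {G : Type*} [Group G] (H : Subgroup G)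
    (η : G → G → ℂˣ) (hη : ∀ x : G, η 1 x = 1 ∧ η x 1 = 1) (g : G)
    (s t : G) (hs : s ∈ H) (hs' : g⁻¹ * s * g ∈ H)
    (ht : t ∈ H) (ht' : g⁻¹ * t * g ∈ H) :
    η s t * η (g⁻¹ * t⁻¹ * g) (g⁻¹ * s⁻¹ * g) *
      d2 η s (t * g) (g⁻¹ * t⁻¹ * g) * d2 η s t g *
      (d2 η (s * t * g) (g⁻¹ * t⁻¹ * g) (g⁻¹ * s⁻¹ * g))⁻¹ =
    (η (t * g) (g⁻¹ * t⁻¹ * g) * η t g) *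
      (η (s * t * g) (g⁻¹ * (s * t)⁻¹ * g) * η (s * t) g)⁻¹ *
      (η (s * g) (g⁻¹ * s⁻¹ * g) * η s g) := by
  unfold d2
  simp only [mul_assoc, mul_inv_rev, inv_mul_cancel_left, mul_inv_cancel_left, inv_inv, mul_inv_cancel, inv_mul_cancel, mul_one, one_mul, (hη _).1, (hη _).2]
  rw [Units.ext_iff]
  push_cast
  field_simp
end

section
/- Let κ be the standard 3-cocycle on ℤ/Nℤ, k ∈ ℤ, e = N/gcd(k,N) the order of k̄ in ℤ/Nℤ, and a ∈ ℤ. Then ∏_{r=1}^{e} κ(k̄, (a+r)·k̄, k̄) = exp(2πi·k²/(N·gcd(k,N))). -/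
open Complex

noncomputable def kappa (N : ℕ) [NeZero N] (j k l : ZMod N) : ℂˣ :=
  Units.mk0
    (Complex.exp (2 * Real.pi * Complex.I / (N ^ 2 : ℂ) * (l.val : ℂ) *
      ((j.val : ℂ) + (k.val : ℂ) - ((j + k).val : ℂ))))
    (Complex.exp_ne_zero _)

/-- `∏_{r=1}^{e} κ(k̄, (a+r)k̄, k̄) = exp(2πi·k²/(N·gcd(k,N)))` where
`e = N/gcd(k,N)` is the order of `k̄` in `ℤ/Nℤ`. -/
theorem kappa_product_formula (N : ℕ) [NeZero N] (k a : ℤ) (e : ℕ)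
    (he : e = N / Int.gcd k N) :
    ∏ r ∈ Finset.Icc 1 e,
        kappa N (k : ZMod N) (((a + (r : ℤ)) * k : ℤ) : ZMod N) (k : ZMod N) =
      Units.mk0
        (Complex.exp (2 * Real.pi * Complex.I * (k : ℂ) ^ 2 /
          ((N : ℂ) * (Int.gcd k N : ℂ))))
        (Complex.exp_ne_zero _) := by
  have hN0 : (N : ℤ) ≠ 0 := by exact_mod_cast NeZero.ne N
  have hNc : (N : ℂ) ≠ 0 := Nat.cast_ne_zero.mpr (NeZero.ne N)
  set g : ℕ := Int.gcd k N with hg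
  have hg0 : g ≠ 0 := by
    intro h
    exact hN0 (by exact_mod_cast (Int.gcd_eq_zero_iff.mp h).2)
  have hgc : (g : ℂ) ≠ 0 := Nat.cast_ne_zero.mpr hg0
  have hgk : (g : ℤ) ∣ k := Int.gcd_dvd_left k (N : ℤ)
  have hgN : g ∣ N := by
    have : (g : ℤ) ∣ (N : ℤ) := Int.gcd_dvd_right k (N : ℤ)
    exact_mod_cast this
  have heg : e * g = N := by rw [he]; exact Nat.div_mul_cancel hgN
  -- kv
  set kv : ℕ := (k : ZMod N).val with hkv
  have hdvd : (N : ℤ) ∣ k - kv := by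
    rw [← ZMod.intCast_zmod_eq_zero_iff_dvd]
    push_cast
    simp [hkv, ZMod.natCast_val, ZMod.cast_id]
  obtain ⟨m, hm⟩ := hdvd
  have hgkv : (g : ℤ) ∣ (kv : ℤ) := by
    have hgNz : (g : ℤ) ∣ (N : ℤ) := by exact_mod_cast hgN
    have : (kv : ℤ) = k - N * m := by linarith [hm]
    rw [this]
    exact dvd_sub hgk (Dvd.dvd.mul_right hgNz m)
  obtain ⟨t2, ht2⟩ : (g : ℤ) ∣ (kv : ℤ) + k := Dvd.dvd.add hgkv hgk
  -- F
  set F : ℕ → ℂ := fun s => ((((a + (s : ℤ)) * k : ℤ) : ZMod N).val : ℂ) with hF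
  have hNek : (N : ℤ) ∣ (e : ℤ) * k := by
    obtain ⟨k', hk'⟩ := hgk
    refine ⟨k', ?_⟩
    rw [hk', ← mul_assoc]
    norm_cast
    rw [heg]
  have hFe : F (e + 1) = F 1 := by
    have hzz : (((a + ((e + 1 : ℕ) : ℤ)) * k : ℤ) : ZMod N)
        = (((a + ((1 : ℕ) : ℤ)) * k : ℤ) : ZMod N) := by
      rw [← sub_eq_zero, ← Int.cast_sub, ZMod.intCast_zmod_eq_zero_iff_dvd]
      have h5 : (a + ((e + 1 : ℕ) : ℤ)) * k - (a + ((1 : ℕ) : ℤ)) * k = (e : ℤ) * k := by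
        push_cast; ring
      rw [h5]; exact hNek
    simp only [hF]
    rw [hzz]
  -- the product as exp of a sum
  apply Units.ext
  rw [Units.coe_prod]
  simp only [kappa, Units.val_mk0]
  rw [← Complex.exp_sum]
  -- rewrite each summand
  have hsum : ∀ r ∈ Finset.Icc 1 e,
      2 * (Real.pi : ℂ) * Complex.I / (N ^ 2 : ℂ) * ((k : ZMod N).val : ℂ) *
        (((k : ZMod N).val : ℂ) + ((((a + (r : ℤ)) * k : ℤ) : ZMod N).val : ℂ) -
          ((((k : ZMod N) + (((a + (r : ℤ)) * k : ℤ) : ZMod N)).val : ℂ)))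
      = 2 * (Real.pi : ℂ) * Complex.I / (N ^ 2 : ℂ) * (kv : ℂ) *
          ((kv : ℂ) + F r - F (r + 1)) := by
    intro r _
    have hadd : (k : ZMod N) + (((a + (r : ℤ)) * k : ℤ) : ZMod N)
        = (((a + ((r : ℕ) + 1 : ℤ)) * k : ℤ) : ZMod N) := by
      push_cast
      ring
    rw [hadd]
    simp only [hF]
    push_cast
    ring
  rw [Finset.sum_congr rfl hsum]
  -- compute the sum
  have htel : ∑ r ∈ Finset.Icc 1 e, ((kv : ℂ) + F r - F (r + 1)) = (e : ℂ) * kv := by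
    have h1 : ∑ r ∈ Finset.Icc 1 e, ((kv : ℂ) + F r - F (r + 1))
        = ∑ r ∈ Finset.Icc 1 e, (kv : ℂ) + ∑ r ∈ Finset.Icc 1 e, (F r - F (r + 1)) := by
      rw [← Finset.sum_add_distrib]
      apply Finset.sum_congr rfl
      intros; ring
    rw [h1]
    have h2 : ∑ r ∈ Finset.Icc 1 e, (F r - F (r + 1)) = 0 := by
      rw [← Finset.Ico_add_one_right_eq_Icc, Finset.sum_Ico_eq_sum_range]
      have h3 : ∑ i ∈ Finset.range (e + 1 - 1), (F (1 + i) - F (1 + i + 1))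
          = ∑ i ∈ Finset.range e, ((fun j => F (1 + j)) i - (fun j => F (1 + j)) (i + 1)) := by
        simp only [Nat.add_sub_cancel]
        apply Finset.sum_congr rfl
        intro i _
        simp [add_assoc, add_comm]
      rw [h3, Finset.sum_range_sub']
      show F (1 + 0) - F (1 + e) = 0
      rw [show 1 + e = e + 1 by ring, hFe]
      ring
    rw [h2, Finset.sum_const, Nat.card_Icc]
    simp
  rw [← Finset.mul_sum, htel]
  -- final exponential equality
  rw [Complex.exp_eq_exp_iff_exists_int]
  refine ⟨-(m * t2), ?_⟩
  have hegC : (e : ℂ) * (g : ℂ) = (N : ℂ) := by exact_mod_cast heg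
  have hmC : (k : ℂ) = (kv : ℂ) + (N : ℂ) * (m : ℂ) := by
    have h := congrArg (Int.cast : ℤ → ℂ) hm
    push_cast at h
    linear_combination h
  have ht2C : (kv : ℂ) + (k : ℂ) = (g : ℂ) * (t2 : ℂ) := by
    have h := congrArg (Int.cast : ℤ → ℂ) ht2
    push_cast at h
    linear_combination h
  have key : (kv : ℂ)^2 - (k : ℂ)^2 + (N : ℂ) * m * ((g : ℂ) * t2) = 0 := by
    linear_combination (-((kv : ℂ) + k)) * hmC + (-((N : ℂ) * m)) * ht2C
  push_cast
  field_simp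
  linear_combination ((kv : ℂ) ^ 2) * hegC + (N : ℂ) * key
end

section
/- Let G act on V so that V is graded by G and carries a τ-twisted G-action with ρ(x)ρ(y) = τ_{|v|}(x,y)ρ(xy) on homogeneous components. The pairing between the two projective-representation descriptions: for g ∈ G, the action x * v := ω(g,x,x⁻¹)⁻¹·(x·v) on the g-homogeneous component of V ⊗ ℂ[G] converts a τ_g-projective representation of C_G(g) into a β_{(g,1)}-projective representation, where β and τ differ by the coboundary of λ_g(x) = ω(g,x,x⁻¹)⁻¹: i.e. β_{(g,1)}(x,y) = τ_g(x,y)·λ_g(y)·λ_g(xy)⁻¹·λ_g(x) for all x,y ∈ C_G(g). -/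
/-- `ϖ((x,f),(y,g),(z,h)) = ω(x,y,z)·ω(f,g,h)⁻¹`. -/
def varpi {G : Type*} [Group G] (ω : G → G → G → ℂˣ) :
    G × G → G × G → G × G → ℂˣ :=
  fun a b c => ω a.1 b.1 c.1 * (ω a.2 b.2 c.2)⁻¹

/-- `β_{(g,1)}(s,t)` on `Stab_Δ((g,1)Δ) ≅ C_G(g)`, built from `ϖ`. -/
def betaDouble {G : Type*} [Group G] (ω : G → G → G → ℂˣ) (g s t : G) : ℂˣ :=
  varpi ω (s, s) ((t, t) * (g, 1)) ((g, 1)⁻¹ * (t, t)⁻¹ * (g, 1)) *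
    varpi ω (s, s) (t, t) (g, 1) *
    (varpi ω ((s, s) * (t, t) * (g, 1)) ((g, 1)⁻¹ * (t, t)⁻¹ * (g, 1))
      ((g, 1)⁻¹ * (s, s)⁻¹ * (g, 1)))⁻¹

/-- On the centralizer `C_G(g)`, the cocycles `β_{(g,1)}` and `τ_g` differ by the
coboundary of `λ_g(x) = ω(g,x,x⁻¹)⁻¹`:
`β_{(g,1)}(x,y) = τ_g(x,y)·λ_g(y)·λ_g(xy)⁻¹·λ_g(x)`. -/
theorem betaDouble_eq_tau_coboundary {G : Type*} [Group G]
    (ω : G → G → G → ℂˣ) (hω : IsCocycle3 ω) (hn : IsNormalized3 ω)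
    (g x y : G) (hx : x * g = g * x) (hy : y * g = g * y) :
    betaDouble ω g x y =
      tau ω g x y * (ω g y y⁻¹)⁻¹ * ((ω g (x * y) (x * y)⁻¹)⁻¹)⁻¹ *
        (ω g x x⁻¹)⁻¹ := by
  have n1 : ∀ a b : G, ω 1 a b = 1 := fun a b => (hn a b).1
  have n2 : ∀ a b : G, ω a 1 b = 1 := fun a b => (hn a b).2.1
  have n3 : ∀ a b : G, ω a b 1 = 1 := fun a b => (hn a b).2.2
  have hyc : Commute y g := hy
  have hxc : Commute x g := hx
  have e1 : g⁻¹ * y⁻¹ * g = y⁻¹ := by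
    rw [mul_assoc, hyc.inv_left.eq, ← mul_assoc, inv_mul_cancel, one_mul]
  have e2 : g⁻¹ * x⁻¹ * g = x⁻¹ := by
    rw [mul_assoc, hxc.inv_left.eq, ← mul_assoc, inv_mul_cancel, one_mul]
  have e3 : y * g * y⁻¹ = g := by rw [hy, mul_inv_cancel_right]
  have e4 : x * y * g * y⁻¹ * x⁻¹ = g := by
    rw [mul_assoc x y g, hy, ← mul_assoc x g y, mul_inv_cancel_right, hx,
      mul_inv_cancel_right]
  have e5 : x * g * x⁻¹ = g := by rw [hx, mul_inv_cancel_right]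
  have e6 : x * g * y = x * y * g := by rw [mul_assoc, ← hy, ← mul_assoc]
  have e7 : x * y * (y⁻¹ * x⁻¹) = 1 := by group
  have h1 := hω x g y y⁻¹
  have h2 := hω x y y⁻¹ x⁻¹
  have h3 := hω x x⁻¹ (x * y) (y⁻¹ * x⁻¹)
  have h4 := hω (x * g) x⁻¹ (x * y) (y⁻¹ * x⁻¹)
  have h5 := hω (x * g) y y⁻¹ x⁻¹
  have h6 := hω g x x⁻¹ (x * y)
  simp only [← hy, mul_inv_cancel, n3, inv_one, mul_one, one_mul] at h1
  simp only [mul_inv_cancel, n2, inv_one, one_mul, mul_one] at h2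
  simp only [mul_inv_cancel, inv_mul_cancel_left, e7, n1, n3, inv_one, one_mul, mul_one] at h3
  simp only [e5, inv_mul_cancel_left, e7, n3, inv_one, mul_one] at h4
  simp only [e6, mul_inv_cancel, n2, inv_one, one_mul, mul_one] at h5
  simp only [← hx, mul_inv_cancel, inv_mul_cancel_left, n2, inv_one, one_mul, mul_one] at h6
  simp only [betaDouble, varpi, tau, Prod.mk_mul_mk, Prod.inv_mk, inv_one, one_mul,
    mul_one, mul_inv_rev, inv_inv, e1, e2, e3, e4, n3]
  have key : ω x (y * g) y⁻¹ * (ω x y y⁻¹)⁻¹ * ω x y g *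
        (ω (x * y) y⁻¹ x⁻¹ * (ω (x * y * g) y⁻¹ x⁻¹)⁻¹) *
        (ω y y⁻¹ x⁻¹ * (ω (x * y) y⁻¹ x⁻¹)⁻¹ * (ω x y (y⁻¹ * x⁻¹))⁻¹ * ω x y y⁻¹) *
        (ω x⁻¹ (x * y) (y⁻¹ * x⁻¹) * ω x y (y⁻¹ * x⁻¹) * ω x x⁻¹ (x * y)) =
      ω x y g * (ω x g y)⁻¹ * ω g x y * (ω g y y⁻¹)⁻¹ * ω g (x * y) (y⁻¹ * x⁻¹) *
        (ω g x x⁻¹)⁻¹ *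
        ((ω g y y⁻¹ * (ω (x * g) y y⁻¹)⁻¹ * ω x (y * g) y⁻¹ * ω x g y) *
         (ω x⁻¹ (x * y) (y⁻¹ * x⁻¹) * (ω g (x * y) (y⁻¹ * x⁻¹))⁻¹ *
           ω (x * g) y (y⁻¹ * x⁻¹) * ω (x * g) x⁻¹ (x * y)) *
         (ω y y⁻¹ x⁻¹ * (ω (x * y * g) y⁻¹ x⁻¹)⁻¹ * (ω (x * g) y (y⁻¹ * x⁻¹))⁻¹ *
           ω (x * g) y y⁻¹) *
         (ω x x⁻¹ (x * y) * (ω (x * g) x⁻¹ (x * y))⁻¹ * (ω g x y)⁻¹ * ω g x x⁻¹)) := by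
    rw [Units.ext_iff]
    simp only [Units.val_mul, Units.val_inv_eq_inv_val]
    field_simp
  rw [h1, h2, h3, h4, h5, h6] at key
  simpa using key
end
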